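/- arXiv:1704.01418 — 2 statements merged into one kernel-verified Lean document; each statement's English description precedes it below -/
import Mathlib

section
/- Let R ⊆ Matₙ(ℝ) be the common zero set of a family of real polynomials in the matrix entries, and let C ⊆ R be a set closed under addition and nonnegative scalar multiplication. If every nonnegative linear combination of elements of C lies in R, then the real linear span of C is contained in R. -/
open MvPolynomial Polynomial

lemma ray_trick {n : ℕ} (g : MvPolynomial (Fin n × Fin n) ℝ)
    (p q : Matrix (Fin n) (Fin n) ℝ)
    (h : ∀ t : ℝ, 0 ≤ t →
      MvPolynomial.eval (fun ij => p ij.1 ij.2 + q ij.1 ij.2 * t) g = 0) :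
    MvPolynomial.eval (fun ij => (p - q) ij.1 ij.2) g = 0 := by
  set φ : Fin n × Fin n → Polynomial ℝ :=
    fun ij => Polynomial.C (p ij.1 ij.2) + Polynomial.C (q ij.1 ij.2) * Polynomial.X with hφ
  have key : ∀ t : ℝ, (MvPolynomial.aeval φ g).eval t =
      MvPolynomial.eval (fun ij => p ij.1 ij.2 + q ij.1 ij.2 * t) g := by
    intro t
    clear h
    induction g using MvPolynomial.induction_on with
    | C a => simp
    | add u v hu hv => simp [hu, hv]
    | mul_X u s hu =>
      rw [map_mul, Polynomial.eval_mul, hu, map_mul]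
      simp [hφ]
  have hzero : MvPolynomial.aeval φ g = 0 := by
    apply Polynomial.eq_zero_of_infinite_isRoot
    apply (Set.Ici_infinite (0:ℝ)).mono
    intro t ht
    simp only [Set.mem_setOf_eq, Polynomial.IsRoot, key t]
    exact h t ht
  have hm1 : MvPolynomial.eval (fun ij => p ij.1 ij.2 + q ij.1 ij.2 * (-1)) g = 0 := by
    rw [← key, hzero, Polynomial.eval_zero]
  have hfun : (fun ij : Fin n × Fin n => (p - q) ij.1 ij.2) =
      (fun ij : Fin n × Fin n => p ij.1 ij.2 + q ij.1 ij.2 * (-1)) := by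
    funext ij
    simp [Matrix.sub_apply]
    ring
  rw [hfun]
  exact hm1

theorem span_subset_variety {n : ℕ} {ι : Type*} (f : ι → MvPolynomial (Fin n × Fin n) ℝ)
    (R : Set (Matrix (Fin n) (Fin n) ℝ))
    (hR : R = {A | ∀ i, MvPolynomial.eval (fun ij => A ij.1 ij.2) (f i) = 0})
    (C : Set (Matrix (Fin n) (Fin n) ℝ))
    (hCR : C ⊆ R)
    (hadd : ∀ A B, A ∈ C → B ∈ C → A + B ∈ C)
    (hsmul : ∀ (A : Matrix (Fin n) (Fin n) ℝ) (α : ℝ), 0 ≤ α → A ∈ C → α • A ∈ C)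
    (hcomb : ∀ (k : ℕ) (c : Fin k → Matrix (Fin n) (Fin n) ℝ) (a : Fin k → ℝ),
      (∀ i, c i ∈ C) → (∀ i, 0 ≤ a i) → (∑ i, a i • c i) ∈ R) :
    (Submodule.span ℝ C : Set (Matrix (Fin n) (Fin n) ℝ)) ⊆ R := by
  have h0R : (0 : Matrix (Fin n) (Fin n) ℝ) ∈ R := by
    have := hcomb 0 (fun i => i.elim0) (fun i => i.elim0)
      (fun i => i.elim0) (fun i => i.elim0)
    simpa using this
  set C0 : Set (Matrix (Fin n) (Fin n) ℝ) := insert 0 C with hC0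
  have hC0R : C0 ⊆ R := by
    intro x hx
    rcases hx with rfl | hx
    · exact h0R
    · exact hCR hx
  have hadd0 : ∀ A B, A ∈ C0 → B ∈ C0 → A + B ∈ C0 := by
    rintro A B (rfl | hA) hB
    · simpa using hB
    · rcases hB with rfl | hB
      · rw [add_zero]; exact Or.inr hA
      · exact Or.inr (hadd A B hA hB)
  have hsmul0 : ∀ (A : Matrix (Fin n) (Fin n) ℝ) (α : ℝ), 0 ≤ α → A ∈ C0 → α • A ∈ C0 := by
    rintro A α hα (rfl | hA)
    · rw [smul_zero]
      exact Set.mem_insert _ _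
    · exact Or.inr (hsmul A α hα hA)
  have hdiff : ∀ x ∈ Submodule.span ℝ C, ∃ p ∈ C0, ∃ q ∈ C0, x = p - q := by
    intro x hx
    induction hx using Submodule.span_induction with
    | mem y hy => exact ⟨y, Or.inr hy, 0, Set.mem_insert _ _, by simp⟩
    | zero => exact ⟨0, Set.mem_insert _ _, 0, Set.mem_insert _ _, by simp⟩
    | add y z hy hz ihy ihz =>
        obtain ⟨p, hp, q, hq, rfl⟩ := ihy
        obtain ⟨p', hp', q', hq', rfl⟩ := ihz
        exact ⟨p + p', hadd0 _ _ hp hp', q + q', hadd0 _ _ hq hq', by abel⟩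
    | smul a y hy ihy =>
        obtain ⟨p, hp, q, hq, rfl⟩ := ihy
        rcases le_total 0 a with ha | ha
        · exact ⟨a • p, hsmul0 _ _ ha hp, a • q, hsmul0 _ _ ha hq, by rw [smul_sub]⟩
        · refine ⟨(-a) • q, hsmul0 _ _ (by linarith) hq,
            (-a) • p, hsmul0 _ _ (by linarith) hp, ?_⟩
          module
  have hray : ∀ p ∈ C0, ∀ q ∈ C0, ∀ t : ℝ, 0 ≤ t → p + t • q ∈ R := by
    intro p hp q hq t ht
    exact hC0R (hadd0 _ _ hp (hsmul0 _ _ ht hq))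
  intro x hx
  obtain ⟨p, hp, q, hq, rfl⟩ := hdiff x hx
  rw [hR]
  intro i
  apply ray_trick
  intro t ht
  have hmem := hray p hp q hq t ht
  rw [hR] at hmem
  have h1 := hmem i
  have hfun : (fun ij : Fin n × Fin n => (p + t • q) ij.1 ij.2) =
      (fun ij : Fin n × Fin n => p ij.1 ij.2 + q ij.1 ij.2 * t) := by
    funext ij
    simp [Matrix.add_apply, Matrix.smul_apply, mul_comm]
  rw [hfun] at h1
  exact h1
end

section
/- The 8-dimensional space of 4×4 real matrices of the form with off-diagonal entries (rows/columns indexed 1..4): row 1 = (∗, κ₁, α, α), row 2 = (κ₂, ∗, β, β), row 3 = (γ, γ, ∗, κ₃), row 4 = (δ, δ, κ₄, ∗), where the diagonal entries ∗ are chosen so that every column sums to zero and α, β, γ, δ, κ₁, κ₂, κ₃, κ₄ ∈ ℝ, is closed under the matrix commutator [A,B] = AB − BA, and hence is an 8-dimensional real Lie algebra. -/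
open Matrix

noncomputable def hkyF : Matrix (Fin 4) (Fin 4) ℝ →ₗ[ℝ] (Fin 8 → ℝ) where
  toFun A := ![A 0 2 - A 0 3, A 1 2 - A 1 3, A 2 0 - A 2 1, A 3 0 - A 3 1,
    ∑ i, A i 0, ∑ i, A i 1, ∑ i, A i 2, ∑ i, A i 3]
  map_add' A B := by
    funext k
    fin_cases k <;>
      simp [Fin.sum_univ_four, Matrix.cons_val_succ,
        show (5:Fin 8)=(4:Fin 7).succ from rfl, show (6:Fin 8)=(5:Fin 7).succ from rfl,
        show (7:Fin 8)=(6:Fin 7).succ from rfl, show (5:Fin 7)=(4:Fin 6).succ from rfl,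
        show (6:Fin 7)=(5:Fin 6).succ from rfl, show (5:Fin 6)=(4:Fin 5).succ from rfl] <;> ring
  map_smul' c A := by
    funext k
    fin_cases k <;>
      simp [Fin.sum_univ_four, Matrix.cons_val_succ,
        show (5:Fin 8)=(4:Fin 7).succ from rfl, show (6:Fin 8)=(5:Fin 7).succ from rfl,
        show (7:Fin 8)=(6:Fin 7).succ from rfl, show (5:Fin 7)=(4:Fin 6).succ from rfl,
        show (6:Fin 7)=(5:Fin 6).succ from rfl, show (5:Fin 6)=(4:Fin 5).succ from rfl] <;> ring

noncomputable def hkyG (v : Fin 8 → ℝ) : Matrix (Fin 4) (Fin 4) ℝ :=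
  !![v 4 - v 2 - v 3, v 5, v 0, 0;
     0, 0, v 1, 0;
     v 2, 0, v 6 - v 0 - v 1, 0;
     v 3, 0, 0, v 7]

theorem hky_span_lie_algebra :
    (∀ A B : Matrix (Fin 4) (Fin 4) ℝ,
      (A 0 2 = A 0 3 ∧ A 1 2 = A 1 3 ∧ A 2 0 = A 2 1 ∧ A 3 0 = A 3 1 ∧
        ∀ j, ∑ i, A i j = 0) →
      (B 0 2 = B 0 3 ∧ B 1 2 = B 1 3 ∧ B 2 0 = B 2 1 ∧ B 3 0 = B 3 1 ∧
        ∀ j, ∑ i, B i j = 0) →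
      ((A * B - B * A) 0 2 = (A * B - B * A) 0 3 ∧
        (A * B - B * A) 1 2 = (A * B - B * A) 1 3 ∧
        (A * B - B * A) 2 0 = (A * B - B * A) 2 1 ∧
        (A * B - B * A) 3 0 = (A * B - B * A) 3 1 ∧
        ∀ j, ∑ i, (A * B - B * A) i j = 0)) ∧
    ∃ V : Submodule ℝ (Matrix (Fin 4) (Fin 4) ℝ),
      (V : Set (Matrix (Fin 4) (Fin 4) ℝ)) =
        {A | A 0 2 = A 0 3 ∧ A 1 2 = A 1 3 ∧ A 2 0 = A 2 1 ∧ A 3 0 = A 3 1 ∧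
          ∀ j, ∑ i, A i j = 0} ∧
      Module.finrank ℝ V = 8 := by
  constructor
  · rintro A B ⟨hA1, hA2, hA3, hA4, hA5⟩ ⟨hB1, hB2, hB3, hB4, hB5⟩
    have sA0 := hA5 0; have sA1 := hA5 1; have sA2 := hA5 2; have sA3 := hA5 3
    have sB0 := hB5 0; have sB1 := hB5 1; have sB2 := hB5 2; have sB3 := hB5 3
    simp only [Fin.sum_univ_four] at sA0 sA1 sA2 sA3 sB0 sB1 sB2 sB3
    refine ⟨?_, ?_, ?_, ?_, ?_⟩
    · simp only [Matrix.sub_apply, Matrix.mul_apply, Fin.sum_univ_four]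
      linear_combination A 0 0 * hB1 + A 0 1 * hB2 + A 0 2 * (sB2 - sB3) -
        A 0 2 * hB1 - A 0 2 * hB2 + (B 2 3 + B 3 3 - B 2 2 - B 3 2) * hA1 -
        B 0 0 * hA1 - B 0 1 * hA2 - B 0 2 * (sA2 - sA3) + B 0 2 * hA1 + B 0 2 * hA2 +
        (A 2 2 + A 3 2 - A 2 3 - A 3 3) * hB1 + (B 2 2 - B 2 3) * hA1 - (A 2 2 - A 2 3) * hB1
    · simp only [Matrix.sub_apply, Matrix.mul_apply, Fin.sum_univ_four]
      linear_combination A 1 0 * hB1 + A 1 1 * hB2 + A 1 2 * (sB2 - sB3) -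
        A 1 2 * hB1 - A 1 2 * hB2 + (B 2 3 + B 3 3 - B 2 2 - B 3 2) * hA2 -
        B 1 0 * hA1 - B 1 1 * hA2 - B 1 2 * (sA2 - sA3) + B 1 2 * hA1 + B 1 2 * hA2 +
        (A 2 2 + A 3 2 - A 2 3 - A 3 3) * hB2 + (B 2 2 - B 2 3) * hA2 - (A 2 2 - A 2 3) * hB2
    · simp only [Matrix.sub_apply, Matrix.mul_apply, Fin.sum_univ_four]
      linear_combination A 2 2 * hB3 + A 2 3 * hB4 + A 2 0 * (sB0 - sB1) -
        A 2 0 * hB3 - A 2 0 * hB4 + (B 0 1 + B 1 1 - B 0 0 - B 1 0) * hA3 -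
        B 2 2 * hA3 - B 2 3 * hA4 - B 2 0 * (sA0 - sA1) + B 2 0 * hA3 + B 2 0 * hA4 +
        (A 0 0 + A 1 0 - A 0 1 - A 1 1) * hB3 + (B 0 0 - B 0 1) * hA3 - (A 0 0 - A 0 1) * hB3
    · simp only [Matrix.sub_apply, Matrix.mul_apply, Fin.sum_univ_four]
      linear_combination A 3 2 * hB3 + A 3 3 * hB4 + A 3 0 * (sB0 - sB1) -
        A 3 0 * hB3 - A 3 0 * hB4 + (B 0 1 + B 1 1 - B 0 0 - B 1 0) * hA4 -
        B 3 2 * hA3 - B 3 3 * hA4 - B 3 0 * (sA0 - sA1) + B 3 0 * hA3 + B 3 0 * hA4 +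
        (A 0 0 + A 1 0 - A 0 1 - A 1 1) * hB4 + (B 0 0 - B 0 1) * hA4 - (A 0 0 - A 0 1) * hB4
    · intro j
      have sAj := hA5 j; have sBj := hB5 j
      simp only [Fin.sum_univ_four] at sAj sBj ⊢
      simp only [Matrix.sub_apply, Matrix.mul_apply, Fin.sum_univ_four]
      linear_combination (B 0 j) * sA0 + (B 1 j) * sA1 + (B 2 j) * sA2 + (B 3 j) * sA3 -
        (A 0 j) * sB0 - (A 1 j) * sB1 - (A 2 j) * sB2 - (A 3 j) * sB3
  · refine ⟨LinearMap.ker hkyF, ?_, ?_⟩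
    · ext A
      simp only [SetLike.mem_coe, LinearMap.mem_ker, Set.mem_setOf_eq]
      constructor
      · intro h
        have h0 := congrFun h 0; have h1 := congrFun h 1
        have h2 := congrFun h 2; have h3 := congrFun h 3
        have h4 := congrFun h 4; have h5 := congrFun h 5
        have h6 := congrFun h 6; have h7 := congrFun h 7
        simp [hkyF, Fin.sum_univ_four, Matrix.cons_val_succ,
          show (5:Fin 8)=(4:Fin 7).succ from rfl, show (6:Fin 8)=(5:Fin 7).succ from rfl,
        show (7:Fin 8)=(6:Fin 7).succ from rfl, show (5:Fin 7)=(4:Fin 6).succ from rfl,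
        show (6:Fin 7)=(5:Fin 6).succ from rfl, show (5:Fin 6)=(4:Fin 5).succ from rfl] at h0 h1 h2 h3 h4 h5 h6 h7
        refine ⟨by linarith, by linarith, by linarith, by linarith, ?_⟩
        intro j
        fin_cases j <;> simp only [Fin.sum_univ_four]
        exacts [h4, h5, h6, h7]
      · rintro ⟨h1, h2, h3, h4, h5⟩
        funext k
        fin_cases k <;>
          simp [hkyF, h1, h2, h3, h4, h5 0, h5 1, h5 2, h5 3, Matrix.cons_val_succ,
            show (5:Fin 8)=(4:Fin 7).succ from rfl, show (6:Fin 8)=(5:Fin 7).succ from rfl,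
        show (7:Fin 8)=(6:Fin 7).succ from rfl, show (5:Fin 7)=(4:Fin 6).succ from rfl,
        show (6:Fin 7)=(5:Fin 6).succ from rfl, show (5:Fin 6)=(4:Fin 5).succ from rfl]
    · have hsurj : Function.Surjective hkyF := by
        intro v
        refine ⟨hkyG v, ?_⟩
        funext k
        fin_cases k <;>
          simp [hkyF, hkyG, Fin.sum_univ_four, Matrix.cons_val_succ, Matrix.vecHead, Matrix.vecTail,
            show (5:Fin 8)=(4:Fin 7).succ from rfl, show (6:Fin 8)=(5:Fin 7).succ from rfl,
        show (7:Fin 8)=(6:Fin 7).succ from rfl, show (5:Fin 7)=(4:Fin 6).succ from rfl,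
        show (6:Fin 7)=(5:Fin 6).succ from rfl, show (5:Fin 6)=(4:Fin 5).succ from rfl] <;> ring
      have h := hkyF.finrank_range_add_finrank_ker
      rw [LinearMap.range_eq_top.2 hsurj, finrank_top] at h
      have h1 : Module.finrank ℝ (Fin 8 → ℝ) = 8 := by simp [Module.finrank_fin_fun]
      have h2 : Module.finrank ℝ (Matrix (Fin 4) (Fin 4) ℝ) = 16 := by
        simp [Module.finrank_matrix]
      omega
end
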